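/- In the semantics with agent-specific names, the formula D_bf p is not semantically equivalent to any formula of the language Φ that does not use the modality D; that is, for every formula φ built only from the propositional variable p, negation, disjunction, and the modalities @_n and R_n, there exists an epistemic model with agent-specific extension functions in which the truth set of D_bf p differs from the truth set of φ. -/

import Mathlib

/-- Formulas of the language Φ: φ ::= p | ¬φ | φ∨φ | @ₙφ | Rₙφ | Dₙφ,
where `P` is the type of propositional variables and `N` the type of names. -/
inductive Formula (P N : Type) : Type
  | var : P → Formula P N
  | neg : Formula P N → Formula P N
  | disj : Formula P N → Formula P N → Formula P N
  | at_ : N → Formula P N → Formula P N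
  | re : N → Formula P N → Formula P N
  | de : N → Formula P N → Formula P N

/-- An epistemic model with agent-specific extensions. -/
structure ModelA (P N : Type) where
  W : Type
  A : Type
  sim : A → W → W → Prop
  sim_equiv : ∀ a, Equivalence (sim a)
  ext : W → A → N → A
  val : P → Set (W × A)

/-- The satisfaction relation `w, a ⊨ φ` for agent-specific extensions. -/
def ModelA.sat {P N : Type} (M : ModelA P N) : Formula P N → M.W → M.A → Prop
  | .var p, w, a => (w, a) ∈ M.val p
  | .neg φ, w, a => ¬ M.sat φ w a
  | .disj φ ψ, w, a => M.sat φ w a ∨ M.sat ψ w a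
  | .at_ n φ, w, a => M.sat φ w (M.ext w a n)
  | .re n φ, w, a => ∀ u, M.sim a w u → M.sat φ u (M.ext w a n)
  | .de n φ, w, a => ∀ u, M.sim a w u → M.sat φ u (M.ext u a n)

/-- The truth set ⟦φ⟧ of a formula, agent-specific setting. -/
def ModelA.truthSet {P N : Type} (M : ModelA P N) (φ : Formula P N) : Set (M.W × M.A) :=
  {x | M.sat φ x.1 x.2}

/-- A formula does not use the modality D. -/
def Formula.noDe {P N : Type} : Formula P N → Prop
  | .var _ => True
  | .neg φ => φ.noDe
  | .disj φ ψ => φ.noDe ∧ ψ.noDe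
  | .at_ _ φ => φ.noDe
  | .re _ φ => φ.noDe
  | .de _ _ => False

/-- The countermodel: worlds and agents are booleans, all worlds
indistinguishable for every agent, `ext w a = w && a`, and `p` holds
everywhere except at `(true, true)`. -/
def Mctr : ModelA Unit Unit where
  W := Bool
  A := Bool
  sim _ _ _ := True
  sim_equiv _ := ⟨fun _ => trivial, fun _ => trivial, fun _ _ => trivial⟩
  ext w a _ := w && a
  val _ := {x | ¬ (x.1 && x.2 = true)}

/-- Invariance of D-free formulas in `Mctr` under equality of `w && a`. -/
lemma Mctr_inv (φ : Formula Unit Unit) (h : φ.noDe) :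
    ∀ w₁ a₁ w₂ a₂ : Bool, (w₁ && a₁) = (w₂ && a₂) →
      (Mctr.sat φ w₁ a₁ ↔ Mctr.sat φ w₂ a₂) := by
  induction φ with
  | var p =>
    intro w₁ a₁ w₂ a₂ he
    simp only [ModelA.sat, Mctr, Set.mem_setOf_eq]
    simp only [Bool.decide_eq_true, he]
    exact Iff.of_eq (congrArg (fun b => ¬ b = true) he)
  | neg ψ ih =>
    intro w₁ a₁ w₂ a₂ he
    simp only [ModelA.sat]
    exact not_congr (ih h w₁ a₁ w₂ a₂ he)
  | disj ψ χ ih₁ ih₂ =>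
    intro w₁ a₁ w₂ a₂ he
    simp only [ModelA.sat]
    exact or_congr (ih₁ h.1 w₁ a₁ w₂ a₂ he) (ih₂ h.2 w₁ a₁ w₂ a₂ he)
  | at_ n ψ ih =>
    intro w₁ a₁ w₂ a₂ he
    simp only [ModelA.sat]
    have : (w₁ && (w₁ && a₁)) = (w₂ && (w₂ && a₂)) := by
      rw [← Bool.and_assoc, Bool.and_self, ← Bool.and_assoc, Bool.and_self, he]
    exact ih h w₁ (Mctr.ext w₁ a₁ n) w₂ (Mctr.ext w₂ a₂ n) this
  | re n ψ ih =>
    intro w₁ a₁ w₂ a₂ he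
    simp only [ModelA.sat]
    constructor
    · intro hs u hu
      exact (ih h u (Mctr.ext w₁ a₁ n) u (Mctr.ext w₂ a₂ n) (by simp [Mctr, he])).mp
        (hs u trivial)
    · intro hs u hu
      exact (ih h u (Mctr.ext w₁ a₁ n) u (Mctr.ext w₂ a₂ n) (by simp [Mctr, he])).mpr
        (hs u trivial)
  | de n ψ ih => exact absurd h (by simp [Formula.noDe])

/-- In the semantics with agent-specific names, D_bf p is not
semantically equivalent to any formula that does not use the modality D: for
every such formula φ there is an epistemic model with agent-specific extensions
in which ⟦D_bf p⟧ ≠ ⟦φ⟧. -/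
theorem de_undefinable_agent_specific (φ : Formula Unit Unit) (h : φ.noDe) :
    ∃ M : ModelA Unit Unit, M.truthSet (.de () (.var ())) ≠ M.truthSet φ := by
  refine ⟨Mctr, fun heq => ?_⟩
  -- D p holds at (true, false)
  have h1 : Mctr.sat (.de () (.var ())) true false := by
    intro u hu
    simp [Mctr, ModelA.sat]
    exact fun _ => Bool.and_false u
  -- D p fails at (false, true)
  have h2 : ¬ Mctr.sat (.de () (.var ())) false true := by
    intro hs
    have := hs true trivial
    simp [Mctr, ModelA.sat] at this
    exact Bool.noConfusion (this rfl)
  have hset := Set.ext_iff.mp heq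
  have hφ1 : Mctr.sat φ true false := (hset (true, false)).mp h1
  have hφ2 : ¬ Mctr.sat φ false true := fun hs => h2 ((hset (false, true)).mpr hs)
  exact hφ2 ((Mctr_inv φ h true false false true rfl).mp hφ1)
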